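/- Let H be an almost symmetric numerical semigroup with e(H) < m(H), minimally generated by a_1 < a_2 < ⋯ < a_n with n < a_1. Then the maximal element of Ap(H, a_1) is not equal to a_n. -/

import Mathlib

/-- A numerical semigroup, viewed as a set of integers: a set of nonnegative
integers containing 0, closed under addition, with finite complement in ℕ. -/
def IsNumericalSemigroup (S : Set ℤ) : Prop :=
  (∀ x ∈ S, 0 ≤ x) ∧ 0 ∈ S ∧ (∀ a ∈ S, ∀ b ∈ S, a + b ∈ S) ∧
    {z : ℤ | 0 ≤ z ∧ z ∉ S}.Finite

/-- The genus: the number of nonnegative integers not in `S`. -/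
noncomputable def genus (S : Set ℤ) : ℕ := {z : ℤ | 0 ≤ z ∧ z ∉ S}.ncard

/-- The Frobenius number: the largest integer not in `S`. -/
noncomputable def frob (S : Set ℤ) : ℤ := sSup {z : ℤ | z ∉ S}

/-- The set of pseudo-Frobenius numbers. -/
def PF (S : Set ℤ) : Set ℤ := {x : ℤ | x ∉ S ∧ ∀ h ∈ S, h ≠ 0 → x + h ∈ S}

/-- The type: the number of pseudo-Frobenius numbers. -/
noncomputable def typ (S : Set ℤ) : ℕ := (PF S).ncard

/-- The multiplicity: the smallest nonzero element of `S`. -/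
noncomputable def mult (S : Set ℤ) : ℤ := sInf {z : ℤ | z ∈ S ∧ z ≠ 0}

/-- The Apéry set of `S` with respect to `n`. -/
def apery (S : Set ℤ) (n : ℤ) : Set ℤ := {s ∈ S | s - n ∉ S}

/-- The dual `H* = M - M` of the maximal ideal `M = S \ {0}`. -/
def dual (S : Set ℤ) : Set ℤ :=
  {z : ℤ | ∀ m ∈ S, m ≠ 0 → z + m ∈ S ∧ z + m ≠ 0}

/-- Almost symmetric: `2 g(S) = F(S) + t(S)`. -/
def AlmostSymmetric (S : Set ℤ) : Prop := 2 * (genus S : ℤ) = frob S + (typ S : ℤ)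

/-- Symmetric: `2 g(S) = F(S) + 1`. -/
def SymmetricNS (S : Set ℤ) : Prop := 2 * (genus S : ℤ) = frob S + 1

/-- Pseudo-symmetric: `2 g(S) = F(S) + 2`. -/
def PseudoSymmetric (S : Set ℤ) : Prop := 2 * (genus S : ℤ) = frob S + 2

/-- The set of minimal generators of `S`: nonzero elements not expressible as the
sum of two nonzero elements of `S`. -/
def minGens (S : Set ℤ) : Set ℤ :=
  {x ∈ S | x ≠ 0 ∧ ∀ a ∈ S, ∀ b ∈ S, a ≠ 0 → b ≠ 0 → x ≠ a + b}

/-- The embedding dimension: the number of minimal generators. -/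
noncomputable def embdim (S : Set ℤ) : ℕ := (minGens S).ncard

/-- The gluing `⟨x S₁, y S₂⟩` of two numerical semigroups. -/
def glue (x y : ℤ) (S₁ S₂ : Set ℤ) : Set ℤ :=
  {z : ℤ | ∃ a ∈ S₁, ∃ b ∈ S₂, z = x * a + y * b}

namespace NS12
variable {S : Set ℤ}

lemma nonneg (hS : IsNumericalSemigroup S) {x : ℤ} (hx : x ∈ S) : 0 ≤ x := hS.1 x hx
lemma zero_mem (hS : IsNumericalSemigroup S) : (0:ℤ) ∈ S := hS.2.1
lemma add_mem (hS : IsNumericalSemigroup S) {a b : ℤ} (ha : a ∈ S) (hb : b ∈ S) :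
    a + b ∈ S := hS.2.2.1 a ha b hb
lemma gaps_finite (hS : IsNumericalSemigroup S) : {z : ℤ | 0 ≤ z ∧ z ∉ S}.Finite := hS.2.2.2

lemma neg_one_not_mem (hS : IsNumericalSemigroup S) : (-1:ℤ) ∉ S :=
  fun h => by linarith [nonneg hS h]

lemma compl_nonempty (hS : IsNumericalSemigroup S) : {z : ℤ | z ∉ S}.Nonempty :=
  ⟨-1, neg_one_not_mem hS⟩

lemma compl_bddAbove (hS : IsNumericalSemigroup S) : BddAbove {z : ℤ | z ∉ S} := by
  obtain ⟨B, hB⟩ := (gaps_finite hS).bddAbove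
  refine ⟨max B 0, fun z hz => ?_⟩
  by_cases h : 0 ≤ z
  · exact le_trans (hB ⟨h, hz⟩) (le_max_left _ _)
  · exact le_trans (le_of_not_ge h) (le_max_right _ _)

lemma le_frob (hS : IsNumericalSemigroup S) {z : ℤ} (hz : z ∉ S) : z ≤ frob S :=
  le_csSup (compl_bddAbove hS) hz

lemma frob_not_mem (hS : IsNumericalSemigroup S) : frob S ∉ S :=
  Int.csSup_mem (compl_nonempty hS) (compl_bddAbove hS)

lemma mem_of_gt_frob (hS : IsNumericalSemigroup S) {z : ℤ} (hz : frob S < z) : z ∈ S := by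
  by_contra h; exact absurd (le_frob hS h) (not_le.2 hz)

lemma neg_one_le_frob (hS : IsNumericalSemigroup S) : (-1:ℤ) ≤ frob S :=
  le_frob hS (neg_one_not_mem hS)

lemma multset_nonempty (hS : IsNumericalSemigroup S) : {z : ℤ | z ∈ S ∧ z ≠ 0}.Nonempty := by
  refine ⟨frob S + 2, mem_of_gt_frob hS (by linarith), ?_⟩
  have := neg_one_le_frob hS; intro h; omega

lemma multset_bddBelow (hS : IsNumericalSemigroup S) : BddBelow {z : ℤ | z ∈ S ∧ z ≠ 0} :=
  ⟨0, fun z hz => nonneg hS hz.1⟩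

lemma mult_mem (hS : IsNumericalSemigroup S) : mult S ∈ S ∧ mult S ≠ 0 :=
  Int.csInf_mem (multset_nonempty hS) (multset_bddBelow hS)

lemma mult_le (hS : IsNumericalSemigroup S) {z : ℤ} (hz : z ∈ S) (hz0 : z ≠ 0) :
    mult S ≤ z := csInf_le (multset_bddBelow hS) ⟨hz, hz0⟩

lemma mult_pos (hS : IsNumericalSemigroup S) : 0 < mult S := by
  have h := mult_mem hS
  have := nonneg hS h.1
  omega

lemma nsmul_mem (hS : IsNumericalSemigroup S) {x : ℤ} (hx : x ∈ S) (k : ℕ) :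
    (k : ℤ) * x ∈ S := by
  induction k with
  | zero => simpa using zero_mem hS
  | succ n ih => have := add_mem hS ih hx; push_cast; convert this using 1; ring


lemma apery_subset_Icc (hS : IsNumericalSemigroup S) :
    apery S (mult S) ⊆ Set.Icc 0 (frob S + mult S) := by
  rintro s ⟨hs, hsm⟩
  exact ⟨nonneg hS hs, by have := le_frob hS hsm; linarith⟩

lemma apery_finite (hS : IsNumericalSemigroup S) : (apery S (mult S)).Finite :=
  (Set.finite_Icc _ _).subset (apery_subset_Icc hS)

lemma apery_inj_aux (hS : IsNumericalSemigroup S) {s s' : ℤ}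
    (hs : s ∈ apery S (mult S)) (hs' : s' ∈ apery S (mult S))
    (hlt : s' < s) (hdvd : mult S ∣ s - s') : False := by
  obtain ⟨k, hk⟩ := hdvd
  have hm := mult_pos hS
  have hk1 : 1 ≤ k := by nlinarith
  have hsm : s - mult S = s' + (((k-1).toNat : ℤ)) * mult S := by
    rw [Int.toNat_of_nonneg (by omega)]; linarith [hk]
  exact hs.2 (hsm ▸ add_mem hS hs'.1 (nsmul_mem hS (mult_mem hS).1 _))

lemma apery_bijOn (hS : IsNumericalSemigroup S) :
    Set.BijOn (fun s => s % (mult S)) (apery S (mult S)) (Set.Ico 0 (mult S)) := by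
  have hm := mult_pos hS
  refine ⟨fun s _ => ⟨Int.emod_nonneg s (by omega), Int.emod_lt_of_pos s hm⟩, ?_, ?_⟩
  · intro s hs s' hs' h
    simp only at h
    have hdvd : mult S ∣ s - s' := by
      apply Int.dvd_of_emod_eq_zero
      rw [Int.sub_emod, h, sub_self, Int.zero_emod]
    rcases lt_trichotomy s' s with hlt | heq | hlt
    · exact absurd (apery_inj_aux hS hs hs' hlt hdvd) id
    · exact heq.symm
    · exact absurd (apery_inj_aux hS hs' hs hlt (dvd_sub_comm.mp hdvd)) id
  · rintro r ⟨hr0, hrm⟩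
    set C := {s : ℤ | s ∈ S ∧ s % mult S = r} with hC
    have hFm : (-1:ℤ) ≤ frob S := neg_one_le_frob hS
    have hCne : C.Nonempty := by
      refine ⟨r + (|frob S| + 1) * mult S, mem_of_gt_frob hS ?_, ?_⟩
      · have h1 : (|frob S| + 1) * mult S ≥ |frob S| + 1 := by nlinarith [abs_nonneg (frob S)]
        have := le_abs_self (frob S); linarith
      · rw [Int.add_mul_emod_self_right, Int.emod_eq_of_lt hr0 hrm]
    have hCbdd : BddBelow C := ⟨0, fun z hz => nonneg hS hz.1⟩
    have hmem := Int.csInf_mem hCne hCbdd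
    refine ⟨sInf C, ⟨hmem.1, ?_⟩, hmem.2⟩
    intro hcon
    have : sInf C - mult S ∈ C := ⟨hcon, by rw [Int.sub_emod_right]; exact hmem.2⟩
    have := csInf_le hCbdd this
    omega

lemma apery_ncard (hS : IsNumericalSemigroup S) :
    (apery S (mult S)).ncard = (mult S).toNat := by
  have h1 : (apery S (mult S)).ncard = (Set.Ico 0 (mult S)).ncard := by
    rw [← Nat.card_coe_set_eq, ← Nat.card_coe_set_eq]
    exact Nat.card_congr ((apery_bijOn hS).equiv _)
  rw [h1, ← Finset.coe_Ico, Set.ncard_coe_finset, Int.card_Ico]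
  simp


lemma mult_mem_minGens (hS : IsNumericalSemigroup S) : mult S ∈ minGens S := by
  refine ⟨(mult_mem hS).1, (mult_mem hS).2, fun a ha b hb ha0 hb0 => ?_⟩
  have h1 := mult_le hS ha ha0
  have h2 := mult_le hS hb hb0
  have := mult_pos hS
  intro h; omega

lemma minGens_subset (hS : IsNumericalSemigroup S) :
    minGens S ⊆ insert (mult S) (apery S (mult S)) := by
  rintro x ⟨hx, hx0, hmin⟩
  by_cases hxm : x - mult S ∈ S
  · rcases eq_or_ne (x - mult S) 0 with h0 | h0
    · left; omega
    · exact absurd (by omega : x = (x - mult S) + mult S)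
        (hmin _ hxm _ (mult_mem hS).1 h0 (mult_mem hS).2)
  · exact Set.mem_insert_iff.2 (Or.inr ⟨hx, hxm⟩)

lemma minGens_finite (hS : IsNumericalSemigroup S) : (minGens S).Finite :=
  (((apery_finite hS).insert _).subset (minGens_subset hS))

lemma mult_not_mem_apery (hS : IsNumericalSemigroup S) : mult S ∉ apery S (mult S) := by
  intro h; exact h.2 (by simpa using zero_mem hS)

lemma exists_non_gen (hS : IsNumericalSemigroup S) (he : (embdim S : ℤ) < mult S) :
    ∃ x ∈ apery S (mult S), x ≠ 0 ∧ x ∉ minGens S := by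
  by_contra hcon
  push_neg at hcon
  have hsub : apery S (mult S) ⊆ insert 0 (minGens S \ {mult S}) := by
    intro x hx
    rcases eq_or_ne x 0 with h0 | h0
    · exact Or.inl h0
    · exact Or.inr ⟨hcon x hx h0, by rintro rfl; exact mult_not_mem_apery hS hx⟩
  have hcard := Set.ncard_le_ncard hsub (((minGens_finite hS).diff).insert _)
  rw [apery_ncard hS] at hcard
  have h1 : (insert (0:ℤ) (minGens S \ {mult S})).ncard ≤ (minGens S \ {mult S}).ncard + 1 :=
    Set.ncard_insert_le _ _
  have h2 : (minGens S \ {mult S}).ncard = embdim S - 1 :=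
    Set.ncard_diff_singleton_of_mem (mult_mem_minGens hS)
  have h3 : 1 ≤ embdim S :=
    (Set.ncard_pos (minGens_finite hS)).2 ⟨_, mult_mem_minGens hS⟩
  have hm := mult_pos hS
  omega

lemma frob_mem_PF (hS : IsNumericalSemigroup S) : frob S ∈ PF S := by
  refine ⟨frob_not_mem hS, fun h hh hh0 => mem_of_gt_frob hS ?_⟩
  have := nonneg hS hh; omega

lemma as_pf (hS : IsNumericalSemigroup S) (halm : AlmostSymmetric S)
    (hm2 : 2 ≤ mult S) {z : ℤ} (hz0 : 0 ≤ z) (hz : z ∉ S) (hfz : frob S - z ∉ S) :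
    z ∈ PF S := by
  set F := frob S with hF
  have hF1 : 1 ≤ F := le_frob hS (fun h1 => by have := mult_le hS h1 one_ne_zero; omega)
  set G := {t : ℤ | 0 ≤ t ∧ t ∉ S} with hG
  set K := {t : ℤ | 0 ≤ t ∧ t ∉ S ∧ F - t ∉ S} with hK
  set L := {t : ℤ | 0 ≤ t ∧ t ∉ S ∧ F - t ∈ S} with hL
  set T := {t : ℤ | 0 ≤ t ∧ t ≤ F ∧ t ∈ S} with hT
  have hGfin : G.Finite := gaps_finite hS
  have hKsub : K ⊆ G := fun t ht => ⟨ht.1, ht.2.1⟩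
  have hLsub : L ⊆ G := fun t ht => ⟨ht.1, ht.2.1⟩
  have hKfin : K.Finite := hGfin.subset hKsub
  have hLfin : L.Finite := hGfin.subset hLsub
  have hTfin : T.Finite := (Set.finite_Icc 0 F).subset (fun t ht => ⟨ht.1, ht.2.1⟩)
  -- G = K ∪ L
  have hGKL : G = K ∪ L := by
    ext t; constructor
    · rintro ⟨h1, h2⟩
      by_cases h : F - t ∈ S
      · exact Or.inr ⟨h1, h2, h⟩
      · exact Or.inl ⟨h1, h2, h⟩
    · rintro (⟨h1, h2, _⟩ | ⟨h1, h2, _⟩) <;> exact ⟨h1, h2⟩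
  have hKLdisj : Disjoint K L := by
    rw [Set.disjoint_left]; rintro t ⟨_, _, h3⟩ ⟨_, _, h6⟩; exact h3 h6
  have c1 : G.ncard = K.ncard + L.ncard := by
    rw [hGKL]; exact Set.ncard_union_eq hKLdisj hKfin hLfin
  -- L = (F - ·) '' T
  have hLimg : L = (fun t => F - t) '' T := by
    ext l; constructor
    · rintro ⟨h1, h2, h3⟩
      have h4 : l ≤ F := le_frob hS h2
      exact ⟨F - l, ⟨by omega, by omega, h3⟩, by simp⟩
    · rintro ⟨t, ⟨h1, h2, h3⟩, rfl⟩
      simp only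
      refine ⟨by omega, fun hc => frob_not_mem hS ?_, by simpa using h3⟩
      have h5 := add_mem hS hc h3
      rw [show F - t + t = F by ring] at h5
      exact h5
  have c2 : L.ncard = T.ncard := by
    rw [hLimg]
    exact Set.ncard_image_of_injective _ (sub_right_injective)
  -- Icc 0 F = T ∪ G
  have hIcc : Set.Icc (0:ℤ) F = T ∪ G := by
    ext t; constructor
    · rintro ⟨h1, h2⟩
      by_cases h : t ∈ S
      · exact Or.inl ⟨h1, h2, h⟩
      · exact Or.inr ⟨h1, h⟩
    · rintro (⟨h1, h2, _⟩ | ⟨h1, h2⟩)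
      · exact ⟨h1, h2⟩
      · exact ⟨h1, le_frob hS h2⟩
  have hTGdisj : Disjoint T G := by
    rw [Set.disjoint_left]; rintro t ⟨_, _, h3⟩ ⟨_, h5⟩; exact h5 h3
  have c3 : T.ncard + G.ncard = (F + 1).toNat := by
    rw [← Set.ncard_union_eq hTGdisj hTfin hGfin, ← hIcc, ← Finset.coe_Icc,
      Set.ncard_coe_finset, Int.card_Icc]
    norm_num
  -- PF ⊆ insert F K
  have hPFsub : PF S ⊆ insert F K := by
    rintro f ⟨hf, hfadd⟩
    have hfm : f + mult S ∈ S := hfadd _ (mult_mem hS).1 (mult_mem hS).2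
    have hf0 : 0 ≤ f := by
      by_contra hneg
      push_neg at hneg
      have hfm0 : f + mult S = 0 := by
        by_contra hne
        have := mult_le hS hfm hne
        omega
      -- f = - mult S; get a nonzero apery element
      have hap : ¬ apery S (mult S) ⊆ {0} := by
        intro hsub
        have := Set.ncard_le_ncard hsub (Set.finite_singleton 0)
        rw [apery_ncard hS, Set.ncard_singleton] at this
        omega
      obtain ⟨x, hx, hx0⟩ := Set.not_subset.1 hap
      simp only [Set.mem_singleton_iff] at hx0
      have : f + x ∈ S := hfadd x hx.1 hx0
      have hfx : f + x = x - mult S := by omega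
      exact hx.2 (hfx ▸ this)
    rcases eq_or_ne f F with rfl | hne
    · exact Set.mem_insert _ _
    · refine Set.mem_insert_iff.2 (Or.inr ⟨hf0, hf, fun hc => ?_⟩)
      have hc0 : F - f ≠ 0 := by omega
      have := hfadd _ hc hc0
      rw [show f + (F - f) = F by ring] at this
      exact frob_not_mem hS this
  have hFK : F ∉ K := fun h => h.2.2 (by simpa using zero_mem hS)
  have hinsfin : (insert F K).Finite := hKfin.insert _
  have c4 : (insert F K).ncard = K.ncard + 1 := by
    rw [Set.ncard_insert_of_notMem hFK hKfin]
  have c5 : typ S ≤ K.ncard + 1 := by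
    rw [← c4]; exact Set.ncard_le_ncard hPFsub hinsfin
  -- arithmetic
  have hgenus : genus S = G.ncard := rfl
  have halm' : 2 * (G.ncard : ℤ) = F + typ S := by rw [← hgenus]; exact halm
  have c3' : (T.ncard : ℤ) + G.ncard = F + 1 := by
    have := c3
    have h0 : ((F + 1).toNat : ℤ) = F + 1 := Int.toNat_of_nonneg (by omega)
    omega
  have hKcard : (K.ncard : ℤ) = (typ S : ℤ) - 1 := by
    have c1' : (G.ncard : ℤ) = K.ncard + L.ncard := by exact_mod_cast c1
    have c2' : (L.ncard : ℤ) = T.ncard := by exact_mod_cast c2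
    omega
  have hPFeq : PF S = insert F K := by
    refine Set.eq_of_subset_of_ncard_le hPFsub ?_ hinsfin
    have : typ S = K.ncard + 1 := by omega
    rw [c4, ← this]; exact le_rfl
  have : z ∈ K := ⟨hz0, hz, hfz⟩
  rw [hPFeq]
  exact Set.mem_insert_iff.2 (Or.inr this)

end NS12
theorem stmt12 (S : Set ℤ) (hS : IsNumericalSemigroup S)
    (halm : AlmostSymmetric S) (he : (embdim S : ℤ) < mult S)
    (w a : ℤ) (hw : IsGreatest (apery S (mult S)) w) (ha : IsGreatest (minGens S) a) :
    w ≠ a := by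
  intro heq
  have hm := NS12.mult_pos hS
  have hm2 : 2 ≤ mult S := by
    have h3 : 1 ≤ embdim S :=
      (Set.ncard_pos (NS12.minGens_finite hS)).2 ⟨_, NS12.mult_mem_minGens hS⟩
    omega
  have hFneg : (-1:ℤ) ≤ frob S := NS12.neg_one_le_frob hS
  have hFm_ap : frob S + mult S ∈ apery S (mult S) := by
    constructor
    · exact NS12.mem_of_gt_frob hS (by omega)
    · simpa using NS12.frob_not_mem hS
  have hw1 : frob S + mult S ≤ w := hw.2 hFm_ap
  have hw2 : w - mult S ≤ frob S := NS12.le_frob hS hw.1.2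
  have hwFm : w = frob S + mult S := by omega
  obtain ⟨x, hx, hx0, hxg⟩ := NS12.exists_non_gen hS he
  have hdec : ∃ y ∈ S, ∃ z ∈ S, y ≠ 0 ∧ z ≠ 0 ∧ x = y + z := by
    by_contra hc
    push_neg at hc
    exact hxg ⟨hx.1, hx0, fun p hp q hq hp0 hq0 => hc p hp q hq hp0 hq0⟩
  obtain ⟨y, hy, z, hz, hy0, hz0, hxyz⟩ := hdec
  have hym : y - mult S ∉ S := by
    intro hc
    have h5 := NS12.add_mem hS hc hz
    rw [show y - mult S + z = x - mult S by omega] at h5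
    exact hx.2 h5
  have hymin : mult S ≤ y := NS12.mult_le hS hy hy0
  have hwmin : w ∈ minGens S := by rw [heq]; exact ha.1
  by_cases hcase : frob S - (y - mult S) ∈ S
  · have hzm : mult S ≤ z := NS12.mult_le hS hz hz0
    have hxw : x ≤ w := hw.2 hx
    have hwy0 : w - y ≠ 0 := by omega
    have hwyS : w - y ∈ S := by
      rw [hwFm, show frob S + mult S - y = frob S - (y - mult S) by ring]
      exact hcase
    exact hwmin.2.2 _ hwyS _ hy hwy0 hy0 (by omega)
  · have hpf : y - mult S ∈ PF S := NS12.as_pf hS halm hm2 (by omega) hym hcase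
    have h6 := hpf.2 z hz hz0
    rw [show y - mult S + z = x - mult S by omega] at h6
    exact hx.2 h6
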